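/- Let G be a finite nilpotent group. Then any two distinct non-isolated vertices H and K of Γ(G) are joined in Γ(G) by a path of length at most 3. -/

import Mathlib

open scoped Pointwise

/-- The co-maximal subgroup graph `Γ(G)`: vertices are the non-trivial proper
subgroups of `G`, and two distinct vertices `H`, `K` are adjacent iff `HK = G`
as a setwise product. -/
def comaximalGraph (G : Type*) [Group G] :
    SimpleGraph {H : Subgroup G // H ≠ ⊥ ∧ H ≠ ⊤} where
  Adj H K := H ≠ K ∧ ((H.1 : Set G) * (K.1 : Set G) = Set.univ)
  symm := by
    constructor
    rintro H K ⟨hne, hmul⟩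
    refine ⟨hne.symm, ?_⟩
    have h := congrArg (fun s : Set G => s⁻¹) hmul
    simpa [mul_inv_rev] using h
  loopless := by
    constructor
    rintro H ⟨hne, _⟩
    exact hne rfl

/-- In a finite nilpotent group, any two distinct non-isolated vertices of
`Γ(G)` are joined by a path of length at most `3`. -/
theorem comaximal_path_length_le_three_of_nilpotent {G : Type*} [Group G] [Finite G]
    [Group.IsNilpotent G]
    (H K : {H : Subgroup G // H ≠ ⊥ ∧ H ≠ ⊤}) (hne : H ≠ K)
    (hH : ∃ L, (comaximalGraph G).Adj H L)
    (hK : ∃ L, (comaximalGraph G).Adj K L) :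
    ∃ p : (comaximalGraph G).Walk H K, p.IsPath ∧ p.length ≤ 3 := by
  -- Each non-isolated vertex is adjacent to a maximal subgroup.
  have key : ∀ (V : {H : Subgroup G // H ≠ ⊥ ∧ H ≠ ⊤}),
      (∃ L, (comaximalGraph G).Adj V L) →
      ∃ M : {H : Subgroup G // H ≠ ⊥ ∧ H ≠ ⊤}, IsCoatom M.1 ∧ (comaximalGraph G).Adj V M := by
    rintro V ⟨L, hneL, hmul⟩
    obtain ⟨M, hM, hLM⟩ := (eq_top_or_exists_le_coatom L.1).resolve_left L.2.2
    have hMbot : M ≠ ⊥ := fun h => L.2.1 (le_bot_iff.mp (h ▸ hLM))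
    have hmul' : ((V.1 : Set G) * (M : Set G)) = Set.univ := by
      apply Set.eq_univ_of_univ_subset
      rw [← hmul]
      exact Set.mul_subset_mul_left (SetLike.coe_subset_coe.mpr hLM)
    have hVM : V.1 ≠ M := by
      rintro rfl
      rw [coe_mul_coe] at hmul'
      exact V.2.2 (SetLike.coe_injective (by simpa using hmul'))
    exact ⟨⟨M, hMbot, hM.1⟩, hM,
      fun h => hVM (congrArg Subtype.val h), hmul'⟩
  obtain ⟨M1, hM1, hadj1⟩ := key H hH
  obtain ⟨M2, hM2, hadj2⟩ := key K hK
  by_cases h1 : M1 = K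
  · subst h1
    refine ⟨hadj1.toWalk, ?_, by simp⟩
    rw [SimpleGraph.Walk.isPath_def]
    simp [SimpleGraph.Adj.toWalk, hadj1.1]
  by_cases h2 : M2 = H
  · subst h2
    refine ⟨hadj2.symm.toWalk, ?_, by simp⟩
    rw [SimpleGraph.Walk.isPath_def]
    simp [SimpleGraph.Adj.toWalk, hne]
  by_cases h3 : M1 = M2
  · subst h3
    refine ⟨SimpleGraph.Walk.cons hadj1 hadj2.symm.toWalk, ?_, by simp⟩
    rw [SimpleGraph.Walk.isPath_def]
    simp only [SimpleGraph.Walk.support_cons, SimpleGraph.Adj.toWalk,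
      SimpleGraph.Walk.support_cons, SimpleGraph.Walk.support_nil]
    simp [List.nodup_cons, hne, hadj1.1, hadj2.1, h1, Ne.symm h2]
  · -- distinct maximal subgroups in a nilpotent group are adjacent
    have hN1 : M1.1.Normal :=
      Subgroup.NormalizerCondition.normal_of_coatom M1.1 (normalizerCondition_of_isNilpotent (G := G)) hM1
    have hN2 : M2.1.Normal :=
      Subgroup.NormalizerCondition.normal_of_coatom M2.1 (normalizerCondition_of_isNilpotent (G := G)) hM2
    have hsup : M1.1 ⊔ M2.1 = ⊤ := by
      refine hM1.2 _ (lt_of_le_of_ne le_sup_left ?_)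
      intro h
      have h2le : M2.1 ≤ M1.1 := h ▸ le_sup_right
      rcases h2le.lt_or_eq with hlt | heq
      · exact hM1.1 (hM2.2 _ hlt)
      · exact h3 (Subtype.ext heq.symm)
    have hadjM : (comaximalGraph G).Adj M1 M2 := by
      refine ⟨fun h => h3 h, ?_⟩
      rw [← Subgroup.mul_normal M1.1 M2.1, hsup]
      simp
    refine ⟨SimpleGraph.Walk.cons hadj1 (SimpleGraph.Walk.cons hadjM hadj2.symm.toWalk),
      ?_, by simp⟩
    rw [SimpleGraph.Walk.isPath_def]
    simp only [SimpleGraph.Walk.support_cons, SimpleGraph.Adj.toWalk,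
      SimpleGraph.Walk.support_nil]
    simp [List.nodup_cons, hne, hadj1.1, hadj2.1, Ne.symm hadj2.1, h1, h3, Ne.symm h2]
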